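/- Let A : ℝ → ℝ be continuously differentiable and let IA : ℝ → ℝ be an antiderivative of A (IA′ = A). Let u, v : ℝ² → ℝ be continuously differentiable functions satisfying the potential system ∂_x v = u and ∂_t v = A(u)·∂_x u + u·IA(u) at every point of ℝ² (this is the potential system of the diffusion–convection equation with B = ∫A + uA, since ∫B = u·∫A). Then for all (t,x) ∈ ℝ²: ∂_t[e^{v(t,x)}] + ∂_x[−e^{v(t,x)}·IA(u(t,x))] = 0. (Case 1.3: the pair F = e^v, G = −e^v∫A is a conserved vector of the potential system, yielding a potential conservation law of the equation with B = ∫A + uA.) -/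

import Mathlib

/-- Partial derivative with respect to the first (time) variable. -/
noncomputable def pT (f : ℝ → ℝ → ℝ) (t x : ℝ) : ℝ := deriv (fun s => f s x) t

/-- Partial derivative with respect to the second (space) variable. -/
noncomputable def pX (f : ℝ → ℝ → ℝ) (t x : ℝ) : ℝ := deriv (fun y => f t y) x

/-- Case 1.3: the pair `F = e^v`, `G = −e^v ∫A` is a conserved vector of the potential
system `v_x = u`, `v_t = A(u) u_x + u ∫A` of the diffusion–convection equation with
`B = ∫A + u A`. -/
theorem conserved_vector_case_1_3
    (A IA : ℝ → ℝ) (hA : ContDiff ℝ 1 A) (hIA : ∀ w : ℝ, HasDerivAt IA (A w) w)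
    (u v : ℝ → ℝ → ℝ)
    (hu : ContDiff ℝ 1 (fun p : ℝ × ℝ => u p.1 p.2))
    (hv : ContDiff ℝ 1 (fun p : ℝ × ℝ => v p.1 p.2))
    (hvx : ∀ t x : ℝ, pX v t x = u t x)
    (hvt : ∀ t x : ℝ, pT v t x = A (u t x) * pX u t x + u t x * IA (u t x)) :
    ∀ t x : ℝ,
      pT (fun t x => Real.exp (v t x)) t x
        + pX (fun t x => -(Real.exp (v t x) * IA (u t x))) t x = 0 := by
  intro t x
  have hud : Differentiable ℝ (fun p : ℝ × ℝ => u p.1 p.2) := hu.differentiable one_ne_zero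
  have hvd : Differentiable ℝ (fun p : ℝ × ℝ => v p.1 p.2) := hv.differentiable one_ne_zero
  have hcT : Differentiable ℝ (fun s : ℝ => (s, x)) := by fun_prop
  have hcX : Differentiable ℝ (fun y : ℝ => (t, y)) := by fun_prop
  have hvT : HasDerivAt (fun s => v s x) (pT v t x) t :=
    ((hvd.comp hcT) t).hasDerivAt
  have hvX : HasDerivAt (fun y => v t y) (pX v t x) x :=
    ((hvd.comp hcX) x).hasDerivAt
  have huX : HasDerivAt (fun y => u t y) (pX u t x) x :=
    ((hud.comp hcX) x).hasDerivAt
  have h1 : HasDerivAt (fun s => Real.exp (v s x))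
      (Real.exp (v t x) * pT v t x) t := by
    simpa [mul_comm] using hvT.exp
  have h2 : HasDerivAt (fun y => Real.exp (v t y))
      (Real.exp (v t x) * pX v t x) x := by
    simpa [mul_comm] using hvX.exp
  have h3 : HasDerivAt (fun y => IA (u t y)) (A (u t x) * pX u t x) x :=
    (hIA (u t x)).comp x huX
  have h4 : HasDerivAt (fun y => -(Real.exp (v t y) * IA (u t y)))
      (-(Real.exp (v t x) * pX v t x * IA (u t x)
        + Real.exp (v t x) * (A (u t x) * pX u t x))) x :=
    (h2.mul h3).neg
  have e1 : pT (fun t x => Real.exp (v t x)) t x = Real.exp (v t x) * pT v t x :=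
    h1.deriv
  have e2 : pX (fun t x => -(Real.exp (v t x) * IA (u t x))) t x
      = -(Real.exp (v t x) * pX v t x * IA (u t x)
        + Real.exp (v t x) * (A (u t x) * pX u t x)) := h4.deriv
  rw [e1, e2, hvt, hvx]
  ring
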